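/- For β > 1 and γ > 1 there exists a constant c > 0 such that N_{β,γ}(r) ≥ c·|r|^{(β+γ-2)/(β-1)} for all |r| sufficiently large, while for β = 1 and γ ≥ 1 there exists c > 0 with N_{1,γ}(r) ≥ c·|r|² for all |r| sufficiently large. -/

import Mathlib

open Set Filter MeasureTheory intervalIntegral

/-- `Ψ_β'(r) = ∫₀^r (1-w²)^(-β) dw`. -/
noncomputable def psiD (β r : ℝ) : ℝ := ∫ w in (0:ℝ)..r, (1 - w ^ 2) ^ (-β)

lemma psi_intble {β a b : ℝ} (h : uIcc a b ⊆ Ioo (-1:ℝ) 1) :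
    IntervalIntegrable (fun w : ℝ => (1 - w ^ 2) ^ (-β)) volume a b := by
  apply ContinuousOn.intervalIntegrable
  apply ContinuousOn.rpow_const
  · fun_prop
  · intro x hx
    have hx' := h hx
    left
    nlinarith [hx'.1, hx'.2]

lemma psi_intble' {β a b : ℝ} (ha : a ∈ Ioo (-1:ℝ) 1) (hb : b ∈ Ioo (-1:ℝ) 1) :
    IntervalIntegrable (fun w : ℝ => (1 - w ^ 2) ^ (-β)) volume a b :=
  psi_intble (Set.ordConnected_Ioo.uIcc_subset ha hb)

lemma psiD_split {β a b : ℝ} (ha : a ∈ Ioo (-1:ℝ) 1) (hb : b ∈ Ioo (-1:ℝ) 1) :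
    psiD β a + (∫ w in a..b, (1 - w ^ 2) ^ (-β)) = psiD β b :=
  intervalIntegral.integral_add_adjacent_intervals
    (psi_intble' (by norm_num) ha) (psi_intble' ha hb)

lemma one_sub_intble {β c d : ℝ} (hc : c < 1) (hd : d < 1) :
    IntervalIntegrable (fun w : ℝ => (1 - w) ^ (-β)) volume c d := by
  apply ContinuousOn.intervalIntegrable
  apply ContinuousOn.rpow_const
  · fun_prop
  · intro x hx
    left
    rcases Set.mem_uIcc.mp hx with ⟨_, h2⟩ | ⟨_, h2⟩ <;> [linarith [lt_of_le_of_lt h2 hd]; linarith [lt_of_le_of_lt h2 hc]]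

lemma integral_one_sub {β c d : ℝ} (hβ : β ≠ 1) (hc : c < 1) (hd : d < 1) :
    ∫ w in c..d, (1 - w) ^ (-β) = ((1-c)^(-β+1) - (1-d)^(-β+1))/(-β+1) := by
  have h := intervalIntegral.integral_comp_sub_left (fun x : ℝ => x ^ (-β)) 1 (a := c) (b := d)
  rw [h, integral_rpow]
  right
  exact ⟨fun h' => hβ (by linarith [neg_injective h']),
    fun h' => by rcases Set.mem_uIcc.mp h' with ⟨h1, _⟩ | ⟨h1, _⟩ <;> linarith⟩

lemma psiD_upper {β t : ℝ} (hβ : 1 < β) (ht1 : 1/2 ≤ t) (ht2 : t < 1) :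
    psiD β t ≤ ((3/4:ℝ)^(-β)/2 + 1/(β-1)) * (1-t)^(-β+1) := by
  have ht0 : (0:ℝ) ≤ t := by linarith
  have hmem : t ∈ Ioo (-1:ℝ) 1 := ⟨by linarith, ht2⟩
  have hhalf : (1/2:ℝ) ∈ Ioo (-1:ℝ) 1 := by norm_num
  have hsplit := psiD_split (β := β) hhalf hmem
  -- bound on [0,1/2]
  have h1 : psiD β (1/2:ℝ) ≤ (3/4:ℝ)^(-β)/2 := by
    have hb : (∫ w in (0:ℝ)..(1/2:ℝ), (1 - w ^ 2) ^ (-β))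
        ≤ ∫ _ in (0:ℝ)..(1/2:ℝ), (3/4:ℝ)^(-β) := by
      apply intervalIntegral.integral_mono_on (by norm_num)
        (psi_intble' (by norm_num) hhalf) (intervalIntegrable_const)
      intro x hx
      apply Real.rpow_le_rpow_of_nonpos (by nlinarith [hx.1, hx.2]) (by nlinarith [hx.1, hx.2]) (by linarith)
    refine hb.trans ?_
    rw [intervalIntegral.integral_const]
    simp
    linarith
  -- bound on [1/2, t]
  have h2 : (∫ w in (1/2:ℝ)..t, (1 - w ^ 2) ^ (-β)) ≤ ∫ w in (1/2:ℝ)..t, (1 - w) ^ (-β) := by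
    apply intervalIntegral.integral_mono_on ht1 (psi_intble' hhalf hmem)
      (one_sub_intble (by norm_num) ht2)
    intro x hx
    have hx1 : 0 < 1 - x := by linarith [lt_of_le_of_lt hx.2 ht2]
    apply Real.rpow_le_rpow_of_nonpos hx1 (by nlinarith [hx.1]) (by linarith)
  have h3 : (∫ w in (1/2:ℝ)..t, (1 - w) ^ (-β)) ≤ (1-t)^(-β+1) / (β-1) := by
    rw [integral_one_sub (by linarith) (by norm_num) ht2]
    have hnn : (0:ℝ) ≤ (1 - (1/2:ℝ))^(-β+1) := Real.rpow_nonneg (by norm_num) _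
    have hnn2 : (0:ℝ) ≤ (1-t)^(-β+1) := Real.rpow_nonneg (by linarith) _
    have hb1 : (β:ℝ) - 1 ≠ 0 := by linarith
    calc ((1 - (1/2:ℝ))^(-β+1) - (1-t)^(-β+1))/(-β+1)
        = ((1-t)^(-β+1) - (1 - (1/2:ℝ))^(-β+1))/(β-1) := by
          rw [show (-β+1 : ℝ) = -(β-1) by ring, div_neg]; ring
      _ ≤ (1-t)^(-β+1) / (β-1) := by gcongr <;> linarith
  have hX : 1 ≤ (1-t)^(-β+1) := by
    apply Real.one_le_rpow_of_pos_of_le_one_of_nonpos (by linarith) (by linarith) (by linarith)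
  have hA : (0:ℝ) ≤ (3/4:ℝ)^(-β) := Real.rpow_nonneg (by norm_num) _
  have e : ((3/4:ℝ)^(-β)/2 + 1/(β-1)) * (1-t)^(-β+1)
      = (3/4:ℝ)^(-β)/2 * (1-t)^(-β+1) + (1-t)^(-β+1)/(β-1) := by ring
  have hone : (3/4:ℝ)^(-β)/2 ≤ (3/4:ℝ)^(-β)/2 * (1-t)^(-β+1) :=
    le_mul_of_one_le_right (by positivity) hX
  linarith [e, hone]

lemma psiD_lower {γ t : ℝ} (hγ : 1 < γ) (ht1 : 1/2 ≤ t) (ht2 : t < 1) :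
    (2:ℝ)^(-γ)/(γ-1) * (1-t)^(-γ+1) - (2:ℝ)^(-γ)/(γ-1) * ((1:ℝ)-1/2)^(-γ+1) ≤ psiD γ t := by
  have hmem : t ∈ Ioo (-1:ℝ) 1 := ⟨by linarith, ht2⟩
  have hhalf : (1/2:ℝ) ∈ Ioo (-1:ℝ) 1 := by norm_num
  have hsplit := psiD_split (β := γ) hhalf hmem
  have h0 : 0 ≤ psiD γ (1/2:ℝ) := by
    apply intervalIntegral.integral_nonneg (by norm_num)
    intro x hx
    exact (Real.rpow_pos_of_pos (by nlinarith [hx.1, hx.2]) _).le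
  have h2 : (∫ w in (1/2:ℝ)..t, (2:ℝ)^(-γ) * (1 - w) ^ (-γ))
      ≤ ∫ w in (1/2:ℝ)..t, (1 - w ^ 2) ^ (-γ) := by
    apply intervalIntegral.integral_mono_on ht1
      ((one_sub_intble (by norm_num) ht2).const_mul _) (psi_intble' hhalf hmem)
    intro x hx
    have hx1 : 0 < 1 - x := by linarith [lt_of_le_of_lt hx.2 ht2]
    have e : (2:ℝ)^(-γ) * (1 - x) ^ (-γ) = ((2:ℝ) * (1 - x)) ^ (-γ) :=
      (Real.mul_rpow (by norm_num) hx1.le).symm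
    rw [e]
    apply Real.rpow_le_rpow_of_nonpos (by nlinarith [hx.1]) (by nlinarith [hx.1]) (by linarith)
  have h3 : (∫ w in (1/2:ℝ)..t, (2:ℝ)^(-γ) * (1 - w) ^ (-γ))
      = (2:ℝ)^(-γ)/(γ-1) * (1-t)^(-γ+1) - (2:ℝ)^(-γ)/(γ-1) * ((1:ℝ)-1/2)^(-γ+1) := by
    rw [intervalIntegral.integral_const_mul, integral_one_sub (by linarith) (by norm_num) ht2,
      show (-γ+1 : ℝ) = -(γ-1) by ring, div_neg]
    field_simp
    ring
  linarith [h3 ▸ h2]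

lemma psiD_odd (β r : ℝ) : psiD β (-r) = - psiD β r := by
  unfold psiD
  have : (∫ w in (0:ℝ)..(-r), (1 - w ^ 2) ^ (-β))
      = ∫ w in (0:ℝ)..(-r), (1 - (-w) ^ 2) ^ (-β) := by
    congr 1; ext w; ring_nf
  rw [this, intervalIntegral.integral_comp_neg (fun w => (1 - w ^ 2) ^ (-β))]
  rw [neg_zero, neg_neg, ← intervalIntegral.integral_symm]

lemma psiD_mono {β a b : ℝ} (ha : -1 < a) (hab : a ≤ b) (hb : b < 1) :
    psiD β a ≤ psiD β b := by
  have ha' : a ∈ Ioo (-1:ℝ) 1 := ⟨ha, lt_of_le_of_lt hab hb⟩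
  have hb' : b ∈ Ioo (-1:ℝ) 1 := ⟨lt_of_lt_of_le ha hab, hb⟩
  have hadd := psiD_split (β := β) ha' hb'
  have hnn : 0 ≤ ∫ w in a..b, (1 - w ^ 2) ^ (-β) := by
    apply intervalIntegral.integral_nonneg hab
    intro x hx
    have h1 : 0 < 1 - x ^ 2 := by nlinarith [lt_of_lt_of_le ha hx.1, lt_of_le_of_lt hx.2 hb]
    exact (Real.rpow_pos_of_pos h1 _).le
  linarith

lemma psiD_ge_self {β t : ℝ} (hβ : 0 ≤ β) (ht0 : 0 ≤ t) (ht1 : t < 1) : t ≤ psiD β t := by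
  have : (∫ w in (0:ℝ)..t, (1:ℝ)) ≤ ∫ w in (0:ℝ)..t, (1 - w ^ 2) ^ (-β) := by
    apply intervalIntegral.integral_mono_on ht0 (by simp)
      (psi_intble' (by norm_num) ⟨by linarith, ht1⟩)
    intro x hx
    have h1 : 0 < 1 - x ^ 2 := by nlinarith [hx.1, lt_of_le_of_lt hx.2 ht1]
    have h2 : 1 - x ^ 2 ≤ 1 := by nlinarith [hx.1]
    exact Real.one_le_rpow_of_pos_of_le_one_of_nonpos h1 h2 (by linarith)
  simpa [psiD] using this

/-- lower growth bounds for `N_{β,γ}(r) = r · Ψ_γ'((Ψ_β')⁻¹ r)`: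
for β > 1, γ > 1 one has `N_{β,γ}(r) ≥ c |r|^((β+γ-2)/(β-1))` for |r| large, and for
β = 1, γ ≥ 1 one has `N_{1,γ}(r) ≥ c |r|²` for |r| large. -/
theorem stmt4 (β γ : ℝ) (hβ : 1 ≤ β) (hγ : 1 ≤ γ) (g : ℝ → ℝ)
    (hg_mem : ∀ s : ℝ, g s ∈ Ioo (-1:ℝ) 1)
    (hg_right : ∀ s : ℝ, psiD β (g s) = s)
    (hg_left : ∀ r ∈ Ioo (-1:ℝ) 1, g (psiD β r) = r) :
    ((1 < β ∧ 1 < γ) → ∃ c > (0:ℝ), ∃ R > (0:ℝ), ∀ r : ℝ, R ≤ |r| →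
      c * |r| ^ ((β + γ - 2) / (β - 1)) ≤ r * psiD γ (g r)) ∧
    (β = 1 → ∃ c > (0:ℝ), ∃ R > (0:ℝ), ∀ r : ℝ, R ≤ |r| →
      c * |r| ^ (2:ℕ) ≤ r * psiD γ (g r)) := by
  have hg_odd : ∀ s : ℝ, g (-s) = - g s := by
    intro s
    have h1 := hg_mem s
    have h2 : (-(g s)) ∈ Ioo (-1:ℝ) 1 := ⟨by linarith [h1.2], by linarith [h1.1]⟩
    have h3 := hg_left _ h2
    rw [psiD_odd, hg_right] at h3
    exact h3
  have hg_nonneg : ∀ r : ℝ, 0 ≤ r → 0 ≤ g r := by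
    intro r hr
    by_contra h
    push_neg at h
    have h1 := hg_mem r
    have h2 := psiD_ge_self (β := β) (by linarith) (t := -(g r)) (by linarith) (by linarith [h1.1])
    rw [psiD_odd] at h2
    have h3 := hg_right r
    linarith
  constructor
  · rintro ⟨hβ1, hγ1⟩
    set A : ℝ := (3/4:ℝ)^(-β)/2 + 1/(β-1) with hA_def
    set B : ℝ := (2:ℝ)^(-γ)/(γ-1) with hB_def
    set C : ℝ := B * ((1:ℝ)-1/2)^(-γ+1) with hC_def
    set q : ℝ := (γ-1)/(β-1) with hq_def
    have hb0 : β - 1 ≠ 0 := by intro h'; rw [sub_eq_zero] at h'; exact (by linarith : (1:ℝ) < β).ne' h'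
    have hA : 0 < A := by
      have h1 : (0:ℝ) < (3/4:ℝ)^(-β) := Real.rpow_pos_of_pos (by norm_num) _
      have h2 : (0:ℝ) < 1/(β-1) := by apply div_pos one_pos; linarith
      rw [hA_def]; linarith
    have hB : 0 < B := by
      rw [hB_def]
      exact div_pos (Real.rpow_pos_of_pos (by norm_num) _) (by linarith)
    have hC : 0 ≤ C := by
      rw [hC_def]
      exact mul_nonneg hB.le (Real.rpow_nonneg (by norm_num) _)
    have hq : 0 < q := by rw [hq_def]; apply div_pos <;> linarith
    have hM : (1/2:ℝ) ≤ psiD β (1/2:ℝ) := psiD_ge_self (by linarith) (by norm_num) (by norm_num)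
    set M : ℝ := psiD β (1/2:ℝ) with hM_def
    set T : ℝ := (2*C/B)^(1/q) with hT_def
    have hT : 0 ≤ T := Real.rpow_nonneg (by positivity) _
    set R : ℝ := A * T + A + M + 1 with hR_def
    have hR : 0 < R := by nlinarith [mul_nonneg hA.le hT]
    have key : ∀ r : ℝ, R ≤ r → (B/2/A^q) * r ^ ((β + γ - 2)/(β-1)) ≤ r * psiD γ (g r) := by
      intro r hr
      have hr0 : 0 < r := lt_of_lt_of_le hR hr
      have hgmem := hg_mem r
      have hhalf : (1/2:ℝ) ≤ g r := by
        by_contra h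
        push_neg at h
        have h1 : psiD β (g r) ≤ psiD β (1/2:ℝ) := psiD_mono hgmem.1 h.le (by norm_num)
        rw [hg_right] at h1
        nlinarith [mul_nonneg hA.le hT]
      have ht2 : g r < 1 := hgmem.2
      have hu : 0 < 1 - g r := by linarith
      have hup : r ≤ A * (1 - g r)^(-β+1) := by
        conv_lhs => rw [← hg_right r]
        exact psiD_upper hβ1 hhalf ht2
      have h4 : r / A ≤ (1 - g r)^(-β+1) := by
        rw [div_le_iff₀ hA]
        nlinarith [hup]
      have h5 : (r/A)^q ≤ (1 - g r)^(-γ+1) := by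
        have e : (1 - g r)^(-γ+1) = ((1 - g r)^(-β+1))^q := by
          rw [← Real.rpow_mul hu.le]
          congr 1
          rw [hq_def]
          field_simp [hb0]
          ring
        rw [e]
        exact Real.rpow_le_rpow (by positivity) h4 hq.le
      have hlow := psiD_lower hγ1 hhalf ht2
      have h6 : B * (r/A)^q - C ≤ psiD γ (g r) := by
        have h6' := mul_le_mul_of_nonneg_left h5 hB.le
        rw [hC_def]
        linarith
      have h8 : T * A ≤ r := by nlinarith [hM]
      have h7 : 2*C/B ≤ (r/A)^q := by
        have h8' : T ≤ r/A := by rw [le_div_iff₀ hA]; linarith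
        calc 2*C/B = (T:ℝ)^q := by
              rw [hT_def, ← Real.rpow_mul (by positivity), one_div, inv_mul_cancel₀ hq.ne',
                Real.rpow_one]
          _ ≤ (r/A)^q := Real.rpow_le_rpow hT h8' hq.le
      have h9 : B/2 * (r/A)^q ≤ psiD γ (g r) := by
        have h9' := mul_le_mul_of_nonneg_left h7 (by positivity : (0:ℝ) ≤ B/2)
        have e : B/2 * (2*C/B) = C := by field_simp
        linarith
      have e2 : (β+γ-2)/(β-1) = 1 + q := by rw [hq_def]; field_simp; ring
      rw [e2]
      have hAq : (0:ℝ) < A^q := Real.rpow_pos_of_pos hA _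
      have e3 : (B/2/A^q) * r ^ (1+q) = r * (B/2 * (r/A)^q) := by
        rw [Real.rpow_add hr0, Real.rpow_one, Real.div_rpow hr0.le hA.le]
        field_simp
      rw [e3]
      exact mul_le_mul_of_nonneg_left h9 hr0.le
    refine ⟨B/2/A^q, by positivity, R, hR, ?_⟩
    intro r hr
    rcases le_or_gt 0 r with h | h
    · rw [abs_of_nonneg h] at hr ⊢
      exact key r hr
    · rw [abs_of_neg h] at hr ⊢
      have hk := key (-r) hr
      have e : (-r) * psiD γ (g (-r)) = r * psiD γ (g r) := by
        rw [hg_odd, psiD_odd]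
        ring
      rw [← e]
      exact hk
  · intro hβ1
    subst hβ1
    refine ⟨1, one_pos, 1, one_pos, ?_⟩
    have key : ∀ r : ℝ, 0 ≤ r → r * r ≤ r * psiD γ (g r) := by
      intro r hr
      have hg0 := hg_nonneg r hr
      have hgmem := hg_mem r
      have h1 : psiD 1 (g r) ≤ psiD γ (g r) := by
        apply intervalIntegral.integral_mono_on hg0
          (psi_intble' (by norm_num) hgmem) (psi_intble' (by norm_num) hgmem)
        intro x hx
        have hx1 : 0 < 1 - x ^ 2 := by nlinarith [hx.1, lt_of_le_of_lt hx.2 hgmem.2]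
        have hx2 : 1 - x ^ 2 ≤ 1 := by nlinarith [hx.1]
        exact Real.rpow_le_rpow_of_exponent_ge hx1 hx2 (by linarith : -γ ≤ -1)
      rw [hg_right] at h1
      exact mul_le_mul_of_nonneg_left h1 hr
    intro r hr
    rcases le_or_gt 0 r with h | h
    · rw [abs_of_nonneg h]
      have := key r h
      nlinarith
    · rw [abs_of_neg h]
      have hk := key (-r) (by linarith)
      have e : (-r) * psiD γ (g (-r)) = r * psiD γ (g r) := by
        rw [hg_odd, psiD_odd]
        ring
      rw [← e]
      linarith [hk]
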